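/- Every multiradial homogeneous distance on H^n is p-vertically symmetric for every p = 1,…,2n+1. -/

import Mathlib

noncomputable section

open Filter Set MeasureTheory
open scoped BigOperators Topology ENNReal MeasureTheory

/-- The Heisenberg group product on `ℝ^{2n+1}` (with its Euclidean structure),
in symplectic coordinates. -/
def hmul (n : ℕ) (x y : EuclideanSpace ℝ (Fin (2*n+1))) : EuclideanSpace ℝ (Fin (2*n+1)) :=
  WithLp.toLp 2 fun j =>
  x j + y j + (if (j : ℕ) = 2*n then
    (∑ i : Fin n, (x ⟨(i:ℕ), by omega⟩ * y ⟨(i:ℕ)+n, by omega⟩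
      - x ⟨(i:ℕ)+n, by omega⟩ * y ⟨(i:ℕ), by omega⟩)) / 2
  else 0)

/-- Intrinsic dilations of the Heisenberg group. -/
def hdil (n : ℕ) (t : ℝ) (x : EuclideanSpace ℝ (Fin (2*n+1))) :
    EuclideanSpace ℝ (Fin (2*n+1)) := WithLp.toLp 2 fun j =>
  if (j : ℕ) = 2*n then t^2 * x j else t * x j

/-- The horizontal layer `H_1`. -/
def H1set (n : ℕ) : Set (EuclideanSpace ℝ (Fin (2*n+1))) := {x | x ⟨2*n, by omega⟩ = 0}

/-- The vertical layer (center) `H_2`. -/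
def H2set (n : ℕ) : Set (EuclideanSpace ℝ (Fin (2*n+1))) :=
  {x | ∀ j : Fin (2*n+1), (j:ℕ) ≠ 2*n → x j = 0}

/-- The vertical unit vector `e_{2n+1}`. -/
def eLast (n : ℕ) : EuclideanSpace ℝ (Fin (2*n+1)) := EuclideanSpace.single ⟨2*n, by omega⟩ 1

/-- A homogeneous distance on the Heisenberg group. -/
structure IsHomDist (n : ℕ)
    (d : EuclideanSpace ℝ (Fin (2*n+1)) → EuclideanSpace ℝ (Fin (2*n+1)) → ℝ) : Prop where
  eq_zero_iff : ∀ x y, d x y = 0 ↔ x = y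
  symm : ∀ x y, d x y = d y x
  triangle : ∀ x y z, d x z ≤ d x y + d y z
  continuous : Continuous
    fun p : EuclideanSpace ℝ (Fin (2*n+1)) × EuclideanSpace ℝ (Fin (2*n+1)) => d p.1 p.2
  ball_mem_nhds : ∀ x : EuclideanSpace ℝ (Fin (2*n+1)), ∀ ε > (0:ℝ), {y | d x y < ε} ∈ nhds x
  leftInvariant : ∀ z x y, d (hmul n z x) (hmul n z y) = d x y
  homogeneous : ∀ t > (0:ℝ), ∀ x y, d (hdil n t x) (hdil n t y) = t * d x y

/-- A homogeneous subgroup: a closed subgroup invariant under all dilations. -/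
structure IsHomSubgroup (n : ℕ) (S : Set (EuclideanSpace ℝ (Fin (2*n+1)))) : Prop where
  zero_mem : (0 : EuclideanSpace ℝ (Fin (2*n+1))) ∈ S
  mul_mem : ∀ x ∈ S, ∀ y ∈ S, hmul n x y ∈ S
  neg_mem : ∀ x ∈ S, -x ∈ S
  dil_mem : ∀ t > (0:ℝ), ∀ x ∈ S, hdil n t x ∈ S
  closed : IsClosed S

/-- A vertical subgroup contains the center `H_2`. -/
def IsVertical (n : ℕ) (S : Set (EuclideanSpace ℝ (Fin (2*n+1)))) : Prop :=
  IsHomSubgroup n S ∧ H2set n ⊆ S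

/-- A horizontal subgroup is contained in `H_1`. -/
def IsHorizontal (n : ℕ) (S : Set (EuclideanSpace ℝ (Fin (2*n+1)))) : Prop :=
  IsHomSubgroup n S ∧ S ⊆ H1set n

/-- `H^n = W ⋊ V`. -/
def IsSemidirect (n : ℕ) (W V : Set (EuclideanSpace ℝ (Fin (2*n+1)))) : Prop :=
  (∀ x, ∃ w ∈ W, ∃ v ∈ V, x = hmul n w v) ∧ W ∩ V = {0}

/-- The norm `∥u_1 ∧ ⋯ ∧ u_m∥` of a wedge of vectors, computed as the square root of the
Gram determinant. -/
def wedgeNorm {m : ℕ} {ι : Type} [Fintype ι] [DecidableEq ι]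
    (u : ι → EuclideanSpace ℝ (Fin m)) : ℝ :=
  Real.sqrt (Matrix.det (Matrix.of fun i j => (inner ℝ (u i) (u j) : ℝ)))

/-- The concatenated family `(v_1,…,v_k, m_1,…,m_{2n-k}, e_{2n+1})`, whose wedge norm is
`∥V ∧ M∥`. -/
def catfam (n k : ℕ) (v : Fin k → EuclideanSpace ℝ (Fin (2*n+1)))
    (m : Fin (2*n-k) → EuclideanSpace ℝ (Fin (2*n+1))) :
    Fin (2*n+1) → EuclideanSpace ℝ (Fin (2*n+1)) := fun i =>
  if h : (i:ℕ) < k then v ⟨(i:ℕ), h⟩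
  else if h2 : (i:ℕ) < 2*n then m ⟨(i:ℕ) - k, by omega⟩
  else eLast n

/-- The projection `π_{H_1}` onto the horizontal layer. -/
def proj1 (n : ℕ) (x : EuclideanSpace ℝ (Fin (2*n+1))) : EuclideanSpace ℝ (Fin (2*n+1)) :=
  WithLp.toLp 2 fun j => if (j : ℕ) = 2*n then 0 else x j

/-- A multiradial homogeneous distance: `d(x,0) = θ(|π_{H_1}x|, |π_{H_2}x|)` with `θ`
continuous, monotone nondecreasing in each variable and coercive. -/
def IsMultiradial (n : ℕ)
    (d : EuclideanSpace ℝ (Fin (2*n+1)) → EuclideanSpace ℝ (Fin (2*n+1)) → ℝ) : Prop :=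
  ∃ θ : ℝ → ℝ → ℝ,
    ContinuousOn (fun p : ℝ × ℝ => θ p.1 p.2) (Set.Ici 0 ×ˢ Set.Ici 0) ∧
    (∀ b, MonotoneOn (fun a => θ a b) (Set.Ici 0)) ∧
    (∀ a, MonotoneOn (θ a) (Set.Ici 0)) ∧
    Tendsto (fun p : ℝ × ℝ => θ p.1 p.2) (cocompact (ℝ × ℝ)) atTop ∧
    ∀ x, d x 0 = θ ‖proj1 n x‖ |x ⟨2*n, by omega⟩|

/-- A `p`-vertically symmetric homogeneous distance: for `p ≥ 2` there is a family of
isometries of `H^n` fixing `H_2` pointwise and preserving `H_1`, acting transitively on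
`(p−1)`-dimensional subspaces of `H_1`, preserving the unit ball; moreover
`π_{H_1}(B(0,1)) = B(0,1) ∩ H_1 = {h ∈ H_1 : θ(|h|) ≤ r_0}` for a monotone nondecreasing
`θ` and some `r_0 > 0`. -/
def IsVertSym (n p : ℕ)
    (d : EuclideanSpace ℝ (Fin (2*n+1)) → EuclideanSpace ℝ (Fin (2*n+1)) → ℝ) : Prop :=
  p = 1 ∨ (2 ≤ p ∧
    ∃ O : Set (EuclideanSpace ℝ (Fin (2*n+1)) ≃ₗᵢ[ℝ] EuclideanSpace ℝ (Fin (2*n+1))),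
      (∀ T ∈ O, ∀ x ∈ H2set n, T x = x) ∧
      (∀ T ∈ O, (⇑T) '' H1set n = H1set n) ∧
      (∀ S1 S2 : Submodule ℝ (EuclideanSpace ℝ (Fin (2*n+1))),
        (S1 : Set (EuclideanSpace ℝ (Fin (2*n+1)))) ⊆ H1set n →
        (S2 : Set (EuclideanSpace ℝ (Fin (2*n+1)))) ⊆ H1set n →
        Module.finrank ℝ S1 = p - 1 → Module.finrank ℝ S2 = p - 1 →
          ∃ T ∈ O, (⇑T) '' (S1 : Set (EuclideanSpace ℝ (Fin (2*n+1))))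
            = (S2 : Set (EuclideanSpace ℝ (Fin (2*n+1))))) ∧
      (∀ T ∈ O, (⇑T) '' {x | d x 0 ≤ 1} = {x | d x 0 ≤ 1}) ∧
      (∃ θ : ℝ → ℝ, MonotoneOn θ (Set.Ici 0) ∧ ∃ r0 > (0:ℝ),
        (proj1 n) '' {x | d x 0 ≤ 1} = {x | d x 0 ≤ 1} ∩ H1set n ∧
        {x | d x 0 ≤ 1} ∩ H1set n = {x | x ∈ H1set n ∧ θ ‖x‖ ≤ r0}))


-- ------------------- auxiliary lemmas -------------------
section Aux
open Module Submodule

abbrev lastIdx (n : ℕ) : Fin (2*n+1) := ⟨2*n, by omega⟩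

lemma proj1_mem (n : ℕ) (x : EuclideanSpace ℝ (Fin (2*n+1))) : proj1 n x ∈ H1set n := by
  simp [proj1, H1set]

lemma proj1_eq_self (n : ℕ) {x : EuclideanSpace ℝ (Fin (2*n+1))} (hx : x ∈ H1set n) :
    proj1 n x = x := by
  ext j
  by_cases h : (j : ℕ) = 2*n
  · have : j = lastIdx n := Fin.ext h
    subst this
    simpa [proj1] using hx.symm
  · simp [proj1, h]

lemma decomp (n : ℕ) (x : EuclideanSpace ℝ (Fin (2*n+1))) :
    x = proj1 n x + x (lastIdx n) • eLast n := by
  ext j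
  by_cases h : (j : ℕ) = 2*n
  · have hj : j = lastIdx n := Fin.ext h
    subst hj
    simp [proj1, eLast, PiLp.add_apply, PiLp.smul_apply, EuclideanSpace.single_apply]
  · have hj : j ≠ lastIdx n := fun hc => h (by rw [hc])
    simp [proj1, eLast, h, PiLp.add_apply, PiLp.smul_apply, EuclideanSpace.single_apply, hj]

lemma norm_eLast (n : ℕ) : ‖eLast n‖ = 1 := by
  simp [eLast, EuclideanSpace.norm_single]

lemma eLast_ne_zero (n : ℕ) : eLast n ≠ 0 := by
  intro h
  have := norm_eLast n
  rw [h] at this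
  simp at this

def Esub (n : ℕ) : Submodule ℝ (EuclideanSpace ℝ (Fin (2*n+1))) := (ℝ ∙ eLast n)ᗮ

lemma Esub_coe (n : ℕ) : (Esub n : Set (EuclideanSpace ℝ (Fin (2*n+1)))) = H1set n := by
  ext x
  rw [SetLike.mem_coe, Esub, Submodule.mem_orthogonal_singleton_iff_inner_right]
  simp [eLast, EuclideanSpace.inner_single_left, H1set]

lemma finrank_Esub (n : ℕ) : Module.finrank ℝ (Esub n) = 2*n := by
  have h1 : Module.finrank ℝ (ℝ ∙ eLast n) = 1 := finrank_span_singleton (eLast_ne_zero n)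
  have := Submodule.finrank_add_finrank_orthogonal (K := (ℝ ∙ eLast n))
  rw [h1, finrank_euclideanSpace_fin] at this
  unfold Esub
  omega

variable {V : Type*} [NormedAddCommGroup V] [InnerProductSpace ℝ V] [FiniteDimensional ℝ V]

lemma span_range_coe (S : Submodule ℝ V) {ι : Type*} [Fintype ι]
    (b : OrthonormalBasis ι ℝ S) :
    Submodule.span ℝ (Set.range fun i => (b i : V)) = S := by
  have h : (fun i => ((b i : S) : V)) = S.subtype ∘ b := rfl
  rw [h, Set.range_comp, ← Submodule.map_span]
  rw [← b.coe_toBasis, b.toBasis.span_eq, Submodule.map_subtype_top]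

lemma exists_adapted (e : V) (he : ‖e‖ = 1) (S : Submodule ℝ V) (hS : S ≤ (ℝ ∙ e)ᗮ)
    {k q : ℕ} (hr : Module.finrank ℝ S = k)
    (hq : Module.finrank ℝ ((ℝ ∙ e)ᗮ : Submodule ℝ V) = k + q)
    (htot : Module.finrank ℝ V = k + q + 1) :
    ∃ B : OrthonormalBasis (Fin k ⊕ (Fin q ⊕ Fin 1)) ℝ V,
      B (Sum.inr (Sum.inr 0)) = e ∧
      Submodule.span ℝ (Set.range fun i => B (Sum.inl i)) = S ∧
      Submodule.span ℝ (Set.range fun i => B (Sum.inl i)) ⊔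
        Submodule.span ℝ (Set.range fun i => B (Sum.inr (Sum.inl i))) = (ℝ ∙ e)ᗮ := by
  classical
  set E : Submodule ℝ V := (ℝ ∙ e)ᗮ with hE
  set C : Submodule ℝ V := Sᗮ ⊓ E with hC
  have hCq : Module.finrank ℝ C = q :=
    Submodule.finrank_add_inf_finrank_orthogonal' hS (by rw [hr, hq])
  let bS : OrthonormalBasis (Fin k) ℝ S := (stdOrthonormalBasis ℝ S).reindex (finCongr (by rw [hr]))
  let bC : OrthonormalBasis (Fin q) ℝ C := (stdOrthonormalBasis ℝ C).reindex (finCongr (by rw [hCq]))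
  set u : (Fin k ⊕ (Fin q ⊕ Fin 1)) → V :=
    Sum.elim (fun i => (bS i : V)) (Sum.elim (fun i => (bC i : V)) fun _ => e) with hu
  -- membership facts
  have hSm : ∀ i, (bS i : V) ∈ S := fun i => (bS i).2
  have hCm : ∀ i, (bC i : V) ∈ C := fun i => (bC i).2
  have hCmO : ∀ i, (bC i : V) ∈ Sᗮ := fun i => (hCm i).1
  have hSmE : ∀ i, (bS i : V) ∈ E := fun i => hS (hSm i)
  have hCmE : ∀ i, (bC i : V) ∈ E := fun i => (hCm i).2
  have hinnerE : ∀ x ∈ E, inner ℝ x e = (0:ℝ) := by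
    intro x hx
    rw [real_inner_comm]
    exact Submodule.inner_right_of_mem_orthogonal (Submodule.mem_span_singleton_self e) hx
  have hon : Orthonormal ℝ u := by
    constructor
    · rintro (i | i | i)
      · exact (Submodule.coe_norm _).symm.trans (bS.orthonormal.1 i)
      · exact (Submodule.coe_norm _).symm.trans (bC.orthonormal.1 i)
      · simpa [hu] using he
    · rintro (i | i | i) (j | j | j) hij <;> simp only [hu, Sum.elim_inl, Sum.elim_inr]
      · rw [← Submodule.coe_inner]
        exact bS.orthonormal.2 (by simpa using hij)
      · exact Submodule.inner_right_of_mem_orthogonal (hSm i) (hCmO j)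
      · exact hinnerE _ (hSmE i)
      · rw [real_inner_comm]
        exact Submodule.inner_right_of_mem_orthogonal (hSm j) (hCmO i)
      · rw [← Submodule.coe_inner]
        exact bC.orthonormal.2 (by simpa using hij)
      · exact hinnerE _ (hCmE i)
      · rw [real_inner_comm]
        exact hinnerE _ (hSmE j)
      · rw [real_inner_comm]
        exact hinnerE _ (hCmE j)
      · exact absurd (by rw [Subsingleton.elim i j]) hij
  have hcard : Fintype.card (Fin k ⊕ (Fin q ⊕ Fin 1)) = Module.finrank ℝ V := by
    simp [htot]; omega
  have hspan : Submodule.span ℝ (Set.range u) = ⊤ :=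
    hon.linearIndependent.span_eq_top_of_card_eq_finrank' hcard
  refine ⟨OrthonormalBasis.mk hon hspan.ge, ?_, ?_, ?_⟩
  · rw [OrthonormalBasis.coe_mk]
    rfl
  · rw [OrthonormalBasis.coe_mk]
    exact span_range_coe S bS
  · rw [OrthonormalBasis.coe_mk]
    have h1 : Submodule.span ℝ (Set.range fun i => u (Sum.inl i)) = S := span_range_coe S bS
    have h2 : Submodule.span ℝ (Set.range fun i => u (Sum.inr (Sum.inl i))) = C :=
      span_range_coe C bC
    rw [h1, h2, hC]
    exact Submodule.sup_orthogonal_inf_of_hasOrthogonalProjection hS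

lemma exists_isometry (e : V) (he : ‖e‖ = 1) (S1 S2 : Submodule ℝ V)
    (hS1 : S1 ≤ (ℝ ∙ e)ᗮ) (hS2 : S2 ≤ (ℝ ∙ e)ᗮ) {k : ℕ}
    (hr1 : Module.finrank ℝ S1 = k) (hr2 : Module.finrank ℝ S2 = k)
    (hk : k ≤ Module.finrank ℝ ((ℝ ∙ e)ᗮ : Submodule ℝ V))
    (htot : Module.finrank ℝ V = Module.finrank ℝ ((ℝ ∙ e)ᗮ : Submodule ℝ V) + 1) :
    ∃ T : V ≃ₗᵢ[ℝ] V, T e = e ∧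
      ⇑T '' (((ℝ ∙ e)ᗮ : Submodule ℝ V) : Set V) = (((ℝ ∙ e)ᗮ : Submodule ℝ V) : Set V) ∧
      ⇑T '' (S1 : Set V) = (S2 : Set V) := by
  classical
  set q : ℕ := Module.finrank ℝ ((ℝ ∙ e)ᗮ : Submodule ℝ V) - k with hqdef
  have hq : Module.finrank ℝ ((ℝ ∙ e)ᗮ : Submodule ℝ V) = k + q := by omega
  have htot' : Module.finrank ℝ V = k + q + 1 := by omega
  obtain ⟨B1, hB1e, hB1s, hB1E⟩ := exists_adapted e he S1 hS1 hr1 hq htot'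
  obtain ⟨B2, hB2e, hB2s, hB2E⟩ := exists_adapted e he S2 hS2 hr2 hq htot'
  set T : V ≃ₗᵢ[ℝ] V := B1.repr.trans B2.repr.symm with hTdef
  have hT : ∀ i, T (B1 i) = B2 i := by
    intro i
    rw [hTdef, LinearIsometryEquiv.trans_apply, B1.repr_self, B2.repr_symm_single]
  set f : V →ₗ[ℝ] V := T.toLinearEquiv.toLinearMap with hfdef
  have hfc : ⇑f = ⇑T := rfl
  have hmapspan : ∀ {ι : Type} (g1 g2 : ι → V), (∀ i, T (g1 i) = g2 i) →
      Submodule.map f (Submodule.span ℝ (Set.range g1)) = Submodule.span ℝ (Set.range g2) := by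
    intro ι g1 g2 hg
    rw [Submodule.map_span, ← Set.range_comp]
    have hc : ⇑f ∘ g1 = g2 := funext fun i => hg i
    rw [hc]
  have hmapS : Submodule.map f S1 = S2 := by
    rw [← hB1s, ← hB2s]
    exact hmapspan _ _ fun i => hT (Sum.inl i)
  have hmapE : Submodule.map f ((ℝ ∙ e)ᗮ : Submodule ℝ V) = ((ℝ ∙ e)ᗮ : Submodule ℝ V) := by
    conv_lhs => rw [← hB1E]
    rw [Submodule.map_sup, hmapspan _ _ fun i => hT (Sum.inl i),
      hmapspan _ _ fun i => hT (Sum.inr (Sum.inl i)), hB2E]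
  refine ⟨T, ?_, ?_, ?_⟩
  · have h' : T e = B2 (Sum.inr (Sum.inr 0)) := by rw [← hB1e]; exact hT _
    rw [h', hB2e]
  · rw [← hfc, ← Submodule.map_coe, hmapE]
  · rw [← hfc, ← Submodule.map_coe, hmapS]


end Aux

/-- Every multiradial homogeneous distance on `H^n` is `p`-vertically symmetric for every
`p = 1,…,2n+1`. -/
theorem stmt_18 (n : ℕ)
    (d : EuclideanSpace ℝ (Fin (2*n+1)) → EuclideanSpace ℝ (Fin (2*n+1)) → ℝ)
    (hd : IsHomDist n d) (hmr : IsMultiradial n d) :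
    ∀ p : ℕ, 1 ≤ p → p ≤ 2*n+1 → IsVertSym n p d := by
  obtain ⟨θ, hθc, hm1, hm2, hcoer, hθ⟩ := hmr
  intro p hp1 hp2
  rcases eq_or_lt_of_le hp1 with h1 | h1
  · exact Or.inl h1.symm
  refine Or.inr ⟨h1, ?_⟩
  set O : Set (EuclideanSpace ℝ (Fin (2*n+1)) ≃ₗᵢ[ℝ] EuclideanSpace ℝ (Fin (2*n+1))) :=
    {T | T (eLast n) = eLast n ∧ ⇑T '' H1set n = H1set n} with hO
  -- key invariance of the distance under elements of O
  have hkey : ∀ T ∈ O, ∀ x, d (T x) 0 = d x 0 := by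
    intro T hT x
    obtain ⟨hTe, hTH⟩ := hT
    have hproj : T (proj1 n x) ∈ H1set n := by
      rw [← hTH]; exact ⟨_, proj1_mem n x, rfl⟩
    have hx : T x = T (proj1 n x) + x (lastIdx n) • eLast n := by
      conv_lhs => rw [decomp n x]
      rw [map_add, T.map_smul, hTe]
    have hplast : T (proj1 n x) (lastIdx n) = 0 := hproj
    have h1' : (T x) (lastIdx n) = x (lastIdx n) := by
      rw [hx]
      simp [PiLp.add_apply, PiLp.smul_apply, eLast, EuclideanSpace.single_apply, hplast]
    have h2' : proj1 n (T x) = T (proj1 n x) := by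
      ext j
      by_cases h : (j : ℕ) = 2*n
      · have hj : j = lastIdx n := Fin.ext h
        subst hj
        rw [hplast]
        simp [proj1]
      · have hj : j ≠ lastIdx n := fun hc => h (by rw [hc])
        simp [proj1, h, hx, PiLp.add_apply, PiLp.smul_apply, eLast,
          EuclideanSpace.single_apply, hj]
    rw [hθ (T x), hθ x, h2', h1', T.norm_map]
  -- the distance of a horizontal point
  have hdx : ∀ x ∈ H1set n, d x 0 = θ ‖x‖ 0 := by
    intro x hx
    have hx' : x (lastIdx n) = 0 := hx
    rw [hθ x, proj1_eq_self n hx, hx', abs_zero]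
  refine ⟨O, ?_, fun T hT => hT.2, ?_, ?_, ?_⟩
  · -- fixes H2 pointwise
    intro T hT x hx
    have hxe : x = x (lastIdx n) • eLast n := by
      ext j
      by_cases h : (j : ℕ) = 2*n
      · have hj : j = lastIdx n := Fin.ext h
        subst hj
        simp [eLast, PiLp.smul_apply, EuclideanSpace.single_apply]
      · have hj : j ≠ lastIdx n := fun hc => h (by rw [hc])
        simp [hx j h, eLast, PiLp.smul_apply, EuclideanSpace.single_apply, hj]
    calc T x = T (x (lastIdx n) • eLast n) := by rw [← hxe]
      _ = x (lastIdx n) • T (eLast n) := T.map_smul _ _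
      _ = x (lastIdx n) • eLast n := by rw [hT.1]
      _ = x := hxe.symm
  · -- transitivity on (p-1)-dimensional horizontal subspaces
    intro S1 S2 hs1 hs2 hr1 hr2
    have hS1' : S1 ≤ Esub n := by
      intro x hx
      have h := (Esub_coe n).symm ▸ hs1 (show x ∈ (S1 : Set _) from hx)
      exact h
    have hS2' : S2 ≤ Esub n := by
      intro x hx
      have h := (Esub_coe n).symm ▸ hs2 (show x ∈ (S2 : Set _) from hx)
      exact h
    have hk : p - 1 ≤ Module.finrank ℝ (Esub n) := by
      rw [finrank_Esub]; omega
    have htot : Module.finrank ℝ (EuclideanSpace ℝ (Fin (2*n+1)))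
        = Module.finrank ℝ (Esub n) + 1 := by
      rw [finrank_Esub, finrank_euclideanSpace_fin]
    obtain ⟨T, hTe, hTE, hTS⟩ :=
      exists_isometry (eLast n) (norm_eLast n) S1 S2 hS1' hS2' hr1 hr2 hk htot
    have hTE' : ⇑T '' H1set n = H1set n := by
      have h := hTE
      rw [show (((ℝ ∙ eLast n)ᗮ : Submodule ℝ _) :
        Set (EuclideanSpace ℝ (Fin (2*n+1)))) = H1set n from Esub_coe n] at h
      exact h
    exact ⟨T, ⟨hTe, hTE'⟩, hTS⟩
  · -- preserves the unit ball
    intro T hT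
    ext y
    constructor
    · rintro ⟨x, hx, rfl⟩
      show d (T x) 0 ≤ 1
      rw [hkey T hT x]
      exact hx
    · intro hy
      refine ⟨T.symm y, ?_, T.apply_symm_apply y⟩
      show d (T.symm y) 0 ≤ 1
      rw [← hkey T hT (T.symm y), T.apply_symm_apply]
      exact hy
  · -- the profile function on the horizontal layer
    refine ⟨fun r => θ r 0, hm1 0, 1, one_pos, ?_, ?_⟩
    · ext y
      constructor
      · rintro ⟨x, hx, rfl⟩
        refine ⟨?_, proj1_mem n x⟩
        show d (proj1 n x) 0 ≤ 1
        rw [hdx _ (proj1_mem n x)]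
        have h0 : θ ‖proj1 n x‖ 0 ≤ θ ‖proj1 n x‖ |x (lastIdx n)| :=
          hm2 ‖proj1 n x‖ (Set.mem_Ici.mpr le_rfl) (Set.mem_Ici.mpr (abs_nonneg _)) (abs_nonneg _)
        calc θ ‖proj1 n x‖ 0 ≤ θ ‖proj1 n x‖ |x (lastIdx n)| := h0
          _ = d x 0 := (hθ x).symm
          _ ≤ 1 := hx
      · rintro ⟨hy, hyH⟩
        exact ⟨y, hy, proj1_eq_self n hyH⟩
    · ext x
      simp only [Set.mem_inter_iff, Set.mem_setOf_eq]
      constructor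
      · rintro ⟨hx1, hx2⟩
        exact ⟨hx2, by rw [← hdx x hx2]; exact hx1⟩
      · rintro ⟨hx1, hx2⟩
        exact ⟨by rw [hdx x hx1]; exact hx2, hx1⟩
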